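/- arXiv:1707.05021 — 2 statements merged into one kernel-verified Lean document; each statement's English description precedes it below -/
import Mathlib

section
/- Let H > 0 and 0 < φ ≤ π. Then ∫₀^φ (sin(θ/2))^{2H} sin θ / √(cos θ − cos φ) dθ = √2 · B(H+1, 1/2) · (sin(φ/2))^{2H+1}. -/
open scoped Real
open MeasureTheory Set

/-- The Euler Beta function `B(a,b) = Γ(a)Γ(b)/Γ(a+b)`. -/
noncomputable def eulerBeta (a b : ℝ) : ℝ :=
  Real.Gamma a * Real.Gamma b / Real.Gamma (a + b)

lemma realBetaIntegral {a b : ℝ} (ha : 0 < a) (hb : 0 < b) :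
    ∫ x in (0:ℝ)..1, x ^ (a - 1) * (1 - x) ^ (b - 1) = eulerBeta a b := by
  have hcast : ((∫ x in (0:ℝ)..1, x ^ (a - 1) * (1 - x) ^ (b - 1) : ℝ) : ℂ)
      = Complex.betaIntegral a b := by
    rw [Complex.betaIntegral, ← intervalIntegral.integral_ofReal]
    refine intervalIntegral.integral_congr fun x hx => ?_
    rw [Set.uIcc_of_le (by norm_num : (0:ℝ) ≤ 1)] at hx
    push_cast
    have h1 : ((a:ℂ) - 1) = ((a - 1 : ℝ) : ℂ) := by push_cast; ring
    have h2 : ((b:ℂ) - 1) = ((b - 1 : ℝ) : ℂ) := by push_cast; ring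
    have h3 : (1 - (x:ℂ)) = ((1 - x : ℝ) : ℂ) := by push_cast; ring
    rw [h1, h2, h3, ← Complex.ofReal_cpow hx.1, ← Complex.ofReal_cpow (by linarith [hx.2])]
  have key := Complex.Gamma_mul_Gamma_eq_betaIntegral
    (s := (a : ℂ)) (t := (b : ℂ)) (by simpa using ha) (by simpa using hb)
  rw [← hcast, ← Complex.ofReal_add, Complex.Gamma_ofReal, Complex.Gamma_ofReal,
    Complex.Gamma_ofReal, ← Complex.ofReal_mul, ← Complex.ofReal_mul] at key
  have key' : Real.Gamma a * Real.Gamma b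
      = Real.Gamma (a + b) * ∫ x in (0:ℝ)..1, x ^ (a - 1) * (1 - x) ^ (b - 1) := by
    exact_mod_cast key
  have hG : Real.Gamma (a + b) ≠ 0 := (Real.Gamma_pos_of_pos (by linarith)).ne'
  rw [eulerBeta, eq_div_iff hG, key']
  ring

lemma sq_rpow_aux {x : ℝ} (hx : 0 ≤ x) (H : ℝ) : ((x ^ 2 : ℝ)) ^ H = x ^ (2 * H) := by
  rw [← Real.rpow_natCast x 2, ← Real.rpow_mul hx]
  norm_num

theorem inner_integral_eval (H : ℝ) (hH : 0 < H) (φ : ℝ) (hφ0 : 0 < φ) (hφπ : φ ≤ π) :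
    ∫ θ in (0:ℝ)..φ,
        (Real.sin (θ / 2)) ^ (2 * H) * Real.sin θ / Real.sqrt (Real.cos θ - Real.cos φ)
      = Real.sqrt 2 * eulerBeta (H + 1) (1 / 2) * (Real.sin (φ / 2)) ^ (2 * H + 1) := by
  have hπ : (0:ℝ) < π := Real.pi_pos
  set s : ℝ := Real.sin (φ / 2) with hs_def
  have hs0 : 0 < s := Real.sin_pos_of_pos_of_lt_pi (by linarith) (by linarith)
  set f : ℝ → ℝ := fun θ => Real.sin (θ / 2) ^ 2 / s ^ 2 with hf_def
  set f' : ℝ → ℝ := fun θ => Real.sin θ / (2 * s ^ 2) with hf'_def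
  set g : ℝ → ℝ := fun t => Real.sqrt 2 * s ^ (2 * H + 1) * (t ^ H * (1 - t) ^ (-(1/2) : ℝ))
    with hg_def
  -- derivative
  have hderiv : ∀ θ, HasDerivAt f (f' θ) θ := by
    intro θ
    have h1 : HasDerivAt (fun θ : ℝ => Real.sin (θ / 2)) (Real.cos (θ / 2) * (1 / 2)) θ := by
      simpa [Function.comp_def] using (Real.hasDerivAt_sin (θ / 2)).comp θ ((hasDerivAt_id θ).div_const 2)
    have h2 := ((h1.pow 2).div_const (s ^ 2))
    have hsin : Real.sin θ = 2 * Real.sin (θ / 2) * Real.cos (θ / 2) := by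
      have h4 := Real.sin_two_mul (θ / 2)
      rw [show 2 * (θ / 2) = θ by ring] at h4
      linarith
    have heq : f' θ = (2:ℕ) * Real.sin (θ / 2) ^ (2 - 1) * (Real.cos (θ / 2) * (1 / 2)) / s ^ 2 := by
      simp only [hf'_def, hsin]
      push_cast
      ring
    exact heq ▸ h2
  -- monotonicity of sin (θ/2) on [0, φ]
  have hmono : ∀ ⦃x⦄, x ∈ Icc (0:ℝ) φ → ∀ ⦃y⦄, y ∈ Icc (0:ℝ) φ → x < y →
      Real.sin (x / 2) < Real.sin (y / 2) := by
    intro x hx y hy hxy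
    apply Real.strictMonoOn_sin _ _ (by linarith)
    · constructor
      · linarith [hx.1]
      · linarith [hx.2]
    · constructor
      · linarith [hy.1]
      · linarith [hy.2]
  have hsin_nonneg : ∀ ⦃x⦄, x ∈ Icc (0:ℝ) φ → 0 ≤ Real.sin (x / 2) := by
    intro x hx
    exact Real.sin_nonneg_of_nonneg_of_le_pi (by linarith [hx.1]) (by linarith [hx.2])
  have hfmono : StrictMonoOn f (Icc 0 φ) := by
    intro x hx y hy hxy
    have h := hmono hx hy hxy
    have hx0 := hsin_nonneg hx
    have h2 : Real.sin (x / 2) ^ 2 < Real.sin (y / 2) ^ 2 := by nlinarith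
    rw [hf_def]
    exact div_lt_div_of_pos_right h2 (by positivity)
  have hinj : InjOn f (Ioo 0 φ) := (hfmono.injOn).mono Ioo_subset_Icc_self
  -- image
  have hf0 : f 0 = 0 := by simp [hf_def]
  have hfφ : f φ = 1 := by
    rw [hf_def]
    field_simp
    rfl
  have hcont : ContinuousOn f (Icc 0 φ) := by
    apply Continuous.continuousOn
    fun_prop
  have himg : f '' Ioo 0 φ = Ioo 0 1 := by
    apply Subset.antisymm
    · rintro _ ⟨θ, hθ, rfl⟩
      have hu0 : 0 < Real.sin (θ / 2) :=
        Real.sin_pos_of_pos_of_lt_pi (by linarith [hθ.1]) (by linarith [hθ.2])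
      have hus : Real.sin (θ / 2) < s :=
        hmono (Ioo_subset_Icc_self hθ) ⟨hφ0.le, le_refl φ⟩ hθ.2
      constructor
      · rw [hf_def]; positivity
      · rw [hf_def]
        rw [div_lt_one (by positivity)]
        nlinarith
    · have h := intermediate_value_Ioo hφ0.le hcont
      rwa [hf0, hfφ] at h
  -- change of variables
  have key := integral_image_eq_integral_abs_deriv_smul measurableSet_Ioo
      (fun x _ => (hderiv x).hasDerivWithinAt) hinj g
  rw [himg] at key
  -- pointwise identification of the integrand
  have hpt : ∀ θ ∈ Ioo (0:ℝ) φ,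
      (Real.sin (θ / 2)) ^ (2 * H) * Real.sin θ / Real.sqrt (Real.cos θ - Real.cos φ)
        = |f' θ| • g (f θ) := by
    intro θ hθ
    set u : ℝ := Real.sin (θ / 2) with hu_def
    have hu0 : 0 < u :=
      Real.sin_pos_of_pos_of_lt_pi (by linarith [hθ.1]) (by linarith [hθ.2])
    have hus : u < s := hmono (Ioo_subset_Icc_self hθ) ⟨hφ0.le, le_refl φ⟩ hθ.2
    have hsinθ : 0 ≤ Real.sin θ :=
      Real.sin_nonneg_of_nonneg_of_le_pi (by linarith [hθ.1]) (by linarith [hθ.2])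
    have hssq : 0 < s ^ 2 - u ^ 2 := by nlinarith
    have c1 : Real.cos θ = 1 - 2 * u ^ 2 := by
      have h := Real.cos_two_mul (θ / 2)
      have h2 := Real.sin_sq_add_cos_sq (θ / 2)
      have h3 : 2 * (θ / 2) = θ := by ring
      rw [h3] at h
      rw [hu_def]; linarith
    have c2 : Real.cos φ = 1 - 2 * s ^ 2 := by
      have h := Real.cos_two_mul (φ / 2)
      have h2 := Real.sin_sq_add_cos_sq (φ / 2)
      have h3 : 2 * (φ / 2) = φ := by ring
      rw [h3] at h
      rw [hs_def]; linarith
    have hcc : Real.cos θ - Real.cos φ = 2 * (s ^ 2 - u ^ 2) := by rw [c1, c2]; ring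
    have e8 : Real.sqrt (2 * (s ^ 2 - u ^ 2)) = Real.sqrt 2 * Real.sqrt (s ^ 2 - u ^ 2) :=
      Real.sqrt_mul (by norm_num) _
    have habs : |f' θ| = Real.sin θ / (2 * s ^ 2) := by
      rw [hf'_def]
      exact abs_of_nonneg (div_nonneg hsinθ (by positivity))
    have hfθ : f θ = u ^ 2 / s ^ 2 := rfl
    have e4 : ((u ^ 2 / s ^ 2 : ℝ)) ^ H = u ^ (2 * H) / s ^ (2 * H) := by
      rw [Real.div_rpow (sq_nonneg u) (sq_nonneg s), sq_rpow_aux hu0.le, sq_rpow_aux hs0.le]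
    have e5 : (1 - u ^ 2 / s ^ 2 : ℝ) = (s ^ 2 - u ^ 2) / s ^ 2 := by field_simp
    have e6 : ((s ^ 2 - u ^ 2) / s ^ 2 : ℝ) ^ (-(1/2) : ℝ) = s / Real.sqrt (s ^ 2 - u ^ 2) := by
      rw [Real.rpow_neg (by positivity), ← Real.sqrt_eq_rpow,
        Real.sqrt_div hssq.le, Real.sqrt_sq hs0.le, inv_div]
    have e7 : s ^ (2 * H + 1) = s ^ (2 * H) * s := by
      rw [Real.rpow_add hs0, Real.rpow_one]
    have hw0 : 0 < Real.sqrt (s ^ 2 - u ^ 2) := Real.sqrt_pos.mpr hssq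
    have h22 : Real.sqrt 2 * Real.sqrt 2 = 2 := Real.mul_self_sqrt (by norm_num)
    have hsH : (0:ℝ) < s ^ (2 * H) := Real.rpow_pos_of_pos hs0 _
    rw [smul_eq_mul, habs, hg_def]
    simp only [hfθ]
    rw [e4, e5, e6, e7, hcc, e8]
    field_simp
    ring_nf
    rw [Real.sq_sqrt (by norm_num : (0:ℝ) ≤ 2)]
  rw [intervalIntegral.integral_of_le hφ0.le, integral_Ioc_eq_integral_Ioo]
  rw [setIntegral_congr_fun measurableSet_Ioo hpt, ← key]
  -- evaluate the beta-type integral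
  rw [← integral_Ioc_eq_integral_Ioo, ← intervalIntegral.integral_of_le zero_le_one]
  rw [hg_def]
  simp only
  rw [intervalIntegral.integral_const_mul]
  have hbeta := realBetaIntegral (a := H + 1) (b := 1/2) (by linarith) (by norm_num)
  have : ∫ x in (0:ℝ)..1, x ^ (H + 1 - 1) * (1 - x) ^ ((1:ℝ)/2 - 1)
      = ∫ x in (0:ℝ)..1, x ^ H * (1 - x) ^ (-(1/2) : ℝ) := by
    congr 1
    ext x
    norm_num
  rw [this] at hbeta
  rw [hbeta]
  ring
end

section
/- Let 0 < H ≤ 1/2. Then lim_{ℓ→∞} ℓ^{2H+2} ∫₀^π sin((ℓ + 1/2)φ) (sin(φ/2))^{2H+1} dφ = −2^{-(2H+1)} Γ(2H+2) sin(πH), where the limit is taken over integers ℓ → ∞. -/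
open scoped Real
open MeasureTheory Filter Set intervalIntegral

noncomputable def oscJ (H c : ℝ) : ℝ :=
  ∫ θ in (0:ℝ)..(π/2), Real.sin (c * θ) * Real.sin θ ^ (2 * H + 1)

lemma oscCont (H : ℝ) (hH0 : 0 < H) (c : ℝ) :
    Continuous (fun θ : ℝ => Real.sin (c * θ) * Real.sin θ ^ (2 * H + 1)) := by
  apply Continuous.mul
  · exact Real.continuous_sin.comp (continuous_const.mul continuous_id)
  · exact (Real.continuous_rpow_const (by linarith)).comp Real.continuous_sin

/-- Substitution φ = 2θ. -/
lemma osc_sub2 (H : ℝ) (hH0 : 0 < H) (ℓ : ℕ) :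
    (∫ φ in (0:ℝ)..π, Real.sin (((ℓ : ℝ) + 1 / 2) * φ) * (Real.sin (φ / 2)) ^ (2 * H + 1))
      = 2 * oscJ H (2 * ℓ + 1) := by
  have h := intervalIntegral.integral_comp_mul_left
    (fun φ : ℝ => Real.sin (((ℓ : ℝ) + 1 / 2) * φ) * (Real.sin (φ / 2)) ^ (2 * H + 1))
    (a := 0) (b := π/2) (c := 2) two_ne_zero
  have h2 : (2:ℝ) * (π/2) = π := by ring
  rw [mul_zero, h2] at h
  have h3 : (fun θ : ℝ => Real.sin (((ℓ : ℝ) + 1 / 2) * (2*θ)) * (Real.sin ((2*θ) / 2)) ^ (2 * H + 1))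
      = fun θ : ℝ => Real.sin ((2 * (ℓ:ℝ) + 1) * θ) * Real.sin θ ^ (2 * H + 1) := by
    funext θ
    have e1 : ((ℓ : ℝ) + 1 / 2) * (2*θ) = (2 * (ℓ:ℝ) + 1) * θ := by ring
    have e2 : (2*θ) / 2 = θ := by ring
    rw [e1, e2]
  rw [h3] at h
  rw [oscJ, h, smul_eq_mul]
  ring

/-- rpow splitting on nonneg base. -/
lemma rpow_succ_of_nonneg {x : ℝ} (hx : 0 ≤ x) (y : ℝ) (hy : y + 1 ≠ 0) :
    x ^ (y + 1) = x ^ y * x := by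
  rcases eq_or_lt_of_le hx with h | h
  · rw [← h]
    simp [Real.zero_rpow hy]
  · exact Real.rpow_add_one h.ne' y

/-- The integration-by-parts recurrence. -/
lemma osc_rec (H : ℝ) (hH0 : 0 < H) (k : ℕ) :
    oscJ H (2 * k + 3) = (((k:ℝ) - H) / ((k:ℝ) + H + 2)) * oscJ H (2 * k + 1) := by
  have hu : ∀ θ ∈ Set.uIcc (0:ℝ) (π/2),
      HasDerivAt (fun θ : ℝ => Real.sin ((2*(k:ℝ)+2) * θ))
        ((2*(k:ℝ)+2) * Real.cos ((2*(k:ℝ)+2)*θ)) θ := by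
    intro θ _
    have h2 : HasDerivAt (fun θ : ℝ => (2*(k:ℝ)+2) * θ) (2*(k:ℝ)+2) θ := by
      simpa using (hasDerivAt_id θ).const_mul (2*(k:ℝ)+2)
    have := (Real.hasDerivAt_sin ((2*(k:ℝ)+2)*θ)).comp θ h2
    simpa [Function.comp_def, mul_comm] using this
  have hv : ∀ θ ∈ Set.uIcc (0:ℝ) (π/2),
      HasDerivAt (fun θ : ℝ => Real.sin θ ^ (2*H+2))
        ((2*H+2) * Real.sin θ ^ (2*H+1) * Real.cos θ) θ := by
    intro θ _
    have h1 : (1:ℝ) ≤ 2*H+2 := by linarith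
    have := (Real.hasDerivAt_rpow_const (x := Real.sin θ) (p := 2*H+2) (Or.inr h1)).comp θ
      (Real.hasDerivAt_sin θ)
    have he : 2*H+2-1 = 2*H+1 := by ring
    simpa [Function.comp_def, he, mul_assoc] using this
  have hcont1 : Continuous fun θ : ℝ => (2*(k:ℝ)+2) * Real.cos ((2*(k:ℝ)+2)*θ) := by
    exact continuous_const.mul (Real.continuous_cos.comp (continuous_const.mul continuous_id))
  have hcont2 : Continuous fun θ : ℝ => (2*H+2) * Real.sin θ ^ (2*H+1) * Real.cos θ := by
    apply Continuous.mul _ Real.continuous_cos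
    exact continuous_const.mul ((Real.continuous_rpow_const (by linarith)).comp Real.continuous_sin)
  have ibp := intervalIntegral.integral_mul_deriv_eq_deriv_mul hu hv
    (hcont1.intervalIntegrable _ _) (hcont2.intervalIntegrable _ _)
  -- boundary terms vanish
  have hb1 : Real.sin ((2*(k:ℝ)+2) * (π/2)) = 0 := by
    have : (2*(k:ℝ)+2) * (π/2) = ((k+1 : ℕ) : ℝ) * π := by push_cast; ring
    rw [this, Real.sin_nat_mul_pi]
  rw [hb1] at ibp
  simp only [Real.sin_zero, zero_mul, mul_zero, sub_zero, zero_sub] at ibp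
  -- rewrite the LHS integrand
  have hL : (∫ θ in (0:ℝ)..(π/2),
        Real.sin ((2*(k:ℝ)+2)*θ) * ((2*H+2) * Real.sin θ ^ (2*H+1) * Real.cos θ))
      = (H+1) * oscJ H (2*(k:ℝ)+3) + (H+1) * oscJ H (2*(k:ℝ)+1) := by
    have hcongr : (fun θ : ℝ => Real.sin ((2*(k:ℝ)+2)*θ) * ((2*H+2) * Real.sin θ ^ (2*H+1) * Real.cos θ))
        = fun θ : ℝ => (H+1) * (Real.sin ((2*(k:ℝ)+3)*θ) * Real.sin θ ^ (2*H+1))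
            + (H+1) * (Real.sin ((2*(k:ℝ)+1)*θ) * Real.sin θ ^ (2*H+1)) := by
      funext θ
      have e1 : Real.sin ((2*(k:ℝ)+3)*θ)
          = Real.sin ((2*(k:ℝ)+2)*θ) * Real.cos θ + Real.cos ((2*(k:ℝ)+2)*θ) * Real.sin θ := by
        rw [show (2*(k:ℝ)+3)*θ = (2*(k:ℝ)+2)*θ + θ by ring, Real.sin_add]
      have e2 : Real.sin ((2*(k:ℝ)+1)*θ)
          = Real.sin ((2*(k:ℝ)+2)*θ) * Real.cos θ - Real.cos ((2*(k:ℝ)+2)*θ) * Real.sin θ := by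
        rw [show (2*(k:ℝ)+1)*θ = (2*(k:ℝ)+2)*θ - θ by ring, Real.sin_sub]
      rw [e1, e2]
      ring
    have hi1 := (continuous_const.mul (oscCont H hH0 (2*(k:ℝ)+3)) : Continuous fun θ : ℝ =>
      (H+1) * (Real.sin ((2*(k:ℝ)+3)*θ) * Real.sin θ ^ (2*H+1))).intervalIntegrable
      (0:ℝ) (π/2) (μ := volume)
    have hi2 := (continuous_const.mul (oscCont H hH0 (2*(k:ℝ)+1)) : Continuous fun θ : ℝ =>
      (H+1) * (Real.sin ((2*(k:ℝ)+1)*θ) * Real.sin θ ^ (2*H+1))).intervalIntegrable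
      (0:ℝ) (π/2) (μ := volume)
    simp only [Pi.mul_def] at hi1 hi2
    rw [hcongr, intervalIntegral.integral_add hi1 hi2, intervalIntegral.integral_const_mul,
      intervalIntegral.integral_const_mul, oscJ, oscJ]
  -- rewrite the RHS integrand
  have hR : (∫ θ in (0:ℝ)..(π/2),
        (2*(k:ℝ)+2) * Real.cos ((2*(k:ℝ)+2)*θ) * Real.sin θ ^ (2*H+2))
      = ((k:ℝ)+1) * oscJ H (2*(k:ℝ)+3) - ((k:ℝ)+1) * oscJ H (2*(k:ℝ)+1) := by
    have hcongr : Set.EqOn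
        (fun θ : ℝ => (2*(k:ℝ)+2) * Real.cos ((2*(k:ℝ)+2)*θ) * Real.sin θ ^ (2*H+2))
        (fun θ : ℝ => ((k:ℝ)+1) * (Real.sin ((2*(k:ℝ)+3)*θ) * Real.sin θ ^ (2*H+1))
            - ((k:ℝ)+1) * (Real.sin ((2*(k:ℝ)+1)*θ) * Real.sin θ ^ (2*H+1)))
        (Set.uIcc (0:ℝ) (π/2)) := by
      intro θ hθ
      rw [Set.uIcc_of_le (by linarith [Real.pi_pos] : (0:ℝ) ≤ π/2)] at hθ
      have hθ0 : 0 ≤ θ := hθ.1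
      have hθπ : θ ≤ π := by linarith [hθ.2, Real.pi_pos]
      have hs : 0 ≤ Real.sin θ := Real.sin_nonneg_of_nonneg_of_le_pi hθ0 hθπ
      have hsp : Real.sin θ ^ (2*H+2) = Real.sin θ ^ (2*H+1) * Real.sin θ := by
        rw [show 2*H+2 = (2*H+1) + 1 by ring, rpow_succ_of_nonneg hs _ (by linarith)]
      have e1 : Real.sin ((2*(k:ℝ)+3)*θ)
          = Real.sin ((2*(k:ℝ)+2)*θ) * Real.cos θ + Real.cos ((2*(k:ℝ)+2)*θ) * Real.sin θ := by
        rw [show (2*(k:ℝ)+3)*θ = (2*(k:ℝ)+2)*θ + θ by ring, Real.sin_add]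
      have e2 : Real.sin ((2*(k:ℝ)+1)*θ)
          = Real.sin ((2*(k:ℝ)+2)*θ) * Real.cos θ - Real.cos ((2*(k:ℝ)+2)*θ) * Real.sin θ := by
        rw [show (2*(k:ℝ)+1)*θ = (2*(k:ℝ)+2)*θ - θ by ring, Real.sin_sub]
      simp only [hsp, e1, e2]
      ring
    have hi1 := (continuous_const.mul (oscCont H hH0 (2*(k:ℝ)+3)) : Continuous fun θ : ℝ =>
      ((k:ℝ)+1) * (Real.sin ((2*(k:ℝ)+3)*θ) * Real.sin θ ^ (2*H+1))).intervalIntegrable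
      (0:ℝ) (π/2) (μ := volume)
    have hi2 := (continuous_const.mul (oscCont H hH0 (2*(k:ℝ)+1)) : Continuous fun θ : ℝ =>
      ((k:ℝ)+1) * (Real.sin ((2*(k:ℝ)+1)*θ) * Real.sin θ ^ (2*H+1))).intervalIntegrable
      (0:ℝ) (π/2) (μ := volume)
    simp only [Pi.mul_def] at hi1 hi2
    rw [intervalIntegral.integral_congr hcongr, intervalIntegral.integral_sub hi1 hi2,
      intervalIntegral.integral_const_mul, intervalIntegral.integral_const_mul, oscJ, oscJ]
  rw [hL, hR] at ibp
  have hden : ((k:ℝ) + H + 2) ≠ 0 := by positivity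
  rw [div_mul_eq_mul_div, eq_div_iff hden]
  show oscJ H (2*(k:ℝ)+3) * ((k:ℝ) + H + 2) = ((k:ℝ) - H) * oscJ H (2*(k:ℝ)+1)
  linear_combination ibp

lemma osc_prod (H : ℝ) (hH0 : 0 < H) (ℓ : ℕ) :
    oscJ H (2 * ℓ + 1) = (∏ k ∈ Finset.range ℓ, (((k:ℝ) - H) / ((k:ℝ) + H + 2))) * oscJ H 1 := by
  induction ℓ with
  | zero => simp
  | succ m ih =>
    have hc : (2 * (((m:ℕ)+1:ℕ)):ℝ) + 1 = 2 * (m:ℝ) + 3 := by push_cast; ring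
    rw [show (2 * (((m+1):ℕ):ℝ) + 1) = 2*(m:ℝ)+3 by push_cast; ring,
      osc_rec H hH0 m, ih, Finset.prod_range_succ]
    ring

/-- Real Beta integral. -/
lemma realBeta (u v : ℝ) (hu : 0 < u) (hv : 0 < v) :
    (∫ x in (0:ℝ)..1, x ^ (u-1) * (1-x) ^ (v-1))
      = Real.Gamma u * Real.Gamma v / Real.Gamma (u+v) := by
  have hcx := Complex.Gamma_mul_Gamma_eq_betaIntegral (s := (u:ℂ)) (t := (v:ℂ))
    (by simpa using hu) (by simpa using hv)
  have hbeta : Complex.betaIntegral u v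
      = ((∫ x in (0:ℝ)..1, x ^ (u-1) * (1-x) ^ (v-1) : ℝ) : ℂ) := by
    rw [Complex.betaIntegral]
    have hcongr : Set.EqOn
        (fun x : ℝ => (x:ℂ) ^ ((u:ℂ)-1) * ((1:ℂ)-(x:ℂ)) ^ ((v:ℂ)-1))
        (fun x : ℝ => ((x ^ (u-1) * (1-x) ^ (v-1) : ℝ) : ℂ))
        (Set.uIcc (0:ℝ) 1) := by
      intro x hx
      rw [Set.uIcc_of_le (by norm_num : (0:ℝ) ≤ 1)] at hx
      have hx0 : 0 ≤ x := hx.1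
      have hx1 : 0 ≤ 1 - x := by linarith [hx.2]
      have c1 : ((u:ℂ)-1) = ((u-1 : ℝ) : ℂ) := by push_cast; ring
      have c2 : ((v:ℂ)-1) = ((v-1 : ℝ) : ℂ) := by push_cast; ring
      have c3 : ((1:ℂ)-(x:ℂ)) = ((1-x : ℝ) : ℂ) := by push_cast; ring
      simp only [c1, c2, c3, ← Complex.ofReal_cpow hx0, ← Complex.ofReal_cpow hx1,
        ← Complex.ofReal_mul]
    rw [intervalIntegral.integral_congr hcongr]
    exact RCLike.intervalIntegral_ofReal (𝕜 := ℂ)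
  rw [hbeta, ← Complex.ofReal_add, Complex.Gamma_ofReal, Complex.Gamma_ofReal,
    Complex.Gamma_ofReal, ← Complex.ofReal_mul, ← Complex.ofReal_mul] at hcx
  have hre := Complex.ofReal_inj.mp hcx
  have hG : Real.Gamma (u+v) ≠ 0 := (Real.Gamma_pos_of_pos (by linarith)).ne'
  rw [eq_div_iff hG]
  linarith [hre]

/-- Substitution x = sin² θ. -/
lemma osc_sub_sq (H : ℝ) (hH0 : 0 < H) :
    (∫ x in (0:ℝ)..1, x ^ (H + 1/2) * (1-x) ^ (-(1:ℝ)/2))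
      = 2 * ∫ θ in (0:ℝ)..(π/2), Real.sin θ ^ (2*H+2) := by
  have hsq1 : ∀ x : ℝ, 0 ≤ x → x < 1 → Real.sqrt x < 1 := by
    intro x hx0 hx1
    have := Real.sqrt_lt_sqrt hx0 hx1
    simpa using this
  have himg : (fun θ : ℝ => Real.sin θ ^ 2) '' Set.Ioo 0 (π/2) = Set.Ioo 0 1 := by
    ext x
    simp only [Set.mem_image, Set.mem_Ioo]
    constructor
    · rintro ⟨θ, hθ, rfl⟩
      have hsp : 0 < Real.sin θ :=
        Real.sin_pos_of_pos_of_lt_pi hθ.1 (by linarith [hθ.2, Real.pi_pos])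
      have hlt : Real.sin θ < 1 := by
        have := Real.strictMonoOn_sin
          (Set.mem_Icc.mpr ⟨by linarith [hθ.1, Real.pi_pos], by linarith [hθ.2]⟩)
          (Set.mem_Icc.mpr ⟨by linarith [Real.pi_pos], le_refl _⟩) hθ.2
        simpa using this
      constructor
      · positivity
      · nlinarith
    · rintro ⟨hx0, hx1⟩
      have hs0 : 0 < Real.sqrt x := Real.sqrt_pos.mpr hx0
      have hs1 : Real.sqrt x < 1 := hsq1 x hx0.le hx1
      refine ⟨Real.arcsin (Real.sqrt x), ⟨?_, ?_⟩, ?_⟩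
      · exact Real.arcsin_pos.mpr hs0
      · exact Real.arcsin_lt_pi_div_two.mpr hs1
      · rw [Real.sin_arcsin (by linarith) (by linarith)]
        exact Real.sq_sqrt hx0.le
  have hderiv : ∀ θ ∈ Set.Ioo (0:ℝ) (π/2),
      HasDerivWithinAt (fun θ : ℝ => Real.sin θ ^ 2)
        (2 * Real.sin θ * Real.cos θ) (Set.Ioo (0:ℝ) (π/2)) θ := by
    intro θ _
    have := ((Real.hasDerivAt_sin θ).pow 2).hasDerivWithinAt
      (s := Set.Ioo (0:ℝ) (π/2))
    simpa [mul_comm, mul_assoc, Pi.pow_def] using this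
  have hinj : Set.InjOn (fun θ : ℝ => Real.sin θ ^ 2) (Set.Ioo 0 (π/2)) := by
    intro a ha b hb hab
    simp only at hab
    have hsa : 0 < Real.sin a :=
      Real.sin_pos_of_pos_of_lt_pi ha.1 (by linarith [ha.2, Real.pi_pos])
    have hsb : 0 < Real.sin b :=
      Real.sin_pos_of_pos_of_lt_pi hb.1 (by linarith [hb.2, Real.pi_pos])
    have habs : |Real.sin a| = |Real.sin b| := by
      rw [← Real.sqrt_sq_eq_abs, ← Real.sqrt_sq_eq_abs, hab]
    rw [abs_of_pos hsa, abs_of_pos hsb] at habs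
    exact Real.injOn_sin
      ⟨by linarith [ha.1, Real.pi_pos], by linarith [ha.2]⟩
      ⟨by linarith [hb.1, Real.pi_pos], by linarith [hb.2]⟩ habs
  have hchg := MeasureTheory.integral_image_eq_integral_abs_deriv_smul
    measurableSet_Ioo hderiv hinj
    (fun x : ℝ => x ^ (H + 1/2) * (1-x) ^ (-(1:ℝ)/2))
  rw [himg] at hchg
  -- simplify the substituted integrand on the open interval
  have hcongr : ∀ θ ∈ Set.Ioo (0:ℝ) (π/2),
      |2 * Real.sin θ * Real.cos θ| •
        ((Real.sin θ ^ 2) ^ (H + 1/2) * (1 - Real.sin θ ^ 2) ^ (-(1:ℝ)/2))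
      = 2 * Real.sin θ ^ (2*H+2) := by
    intro θ hθ
    have hsp : 0 < Real.sin θ :=
      Real.sin_pos_of_pos_of_lt_pi hθ.1 (by linarith [hθ.2, Real.pi_pos])
    have hcp : 0 < Real.cos θ :=
      Real.cos_pos_of_mem_Ioo ⟨by linarith [hθ.1, Real.pi_pos], hθ.2⟩
    have h1 : 1 - Real.sin θ ^ 2 = Real.cos θ ^ 2 := by
      have := Real.sin_sq_add_cos_sq θ; linarith
    have h2 : (Real.sin θ ^ 2) ^ (H + 1/2) = Real.sin θ ^ (2*H+1) := by
      rw [← Real.rpow_natCast (Real.sin θ) 2, ← Real.rpow_mul hsp.le]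
      congr 1
      push_cast; ring
    have h3 : (Real.cos θ ^ 2) ^ (-(1:ℝ)/2) = (Real.cos θ)⁻¹ := by
      rw [← Real.rpow_natCast (Real.cos θ) 2, ← Real.rpow_mul hcp.le,
        show ((2:ℕ):ℝ) * (-(1:ℝ)/2) = -1 by push_cast; ring, Real.rpow_neg_one]
    rw [h1, h2, h3, abs_of_pos (by positivity), smul_eq_mul]
    calc 2 * Real.sin θ * Real.cos θ * (Real.sin θ ^ (2*H+1) * (Real.cos θ)⁻¹)
        = 2 * (Real.sin θ ^ (2*H+1) * Real.sin θ) * (Real.cos θ * (Real.cos θ)⁻¹) := by ring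
      _ = 2 * Real.sin θ ^ (2*H+2) := by
          rw [mul_inv_cancel₀ hcp.ne', mul_one, ← Real.rpow_add_one hsp.ne',
            show 2*H+1+1 = 2*H+2 by ring]
  rw [MeasureTheory.setIntegral_congr_fun measurableSet_Ioo hcongr] at hchg
  -- convert set integrals to interval integrals
  have hpi2 : (0:ℝ) ≤ π/2 := by linarith [Real.pi_pos]
  rw [intervalIntegral.integral_of_le (by norm_num : (0:ℝ) ≤ 1),
    MeasureTheory.integral_Ioc_eq_integral_Ioo, hchg,
    intervalIntegral.integral_of_le hpi2, MeasureTheory.integral_Ioc_eq_integral_Ioo]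
  rw [MeasureTheory.integral_const_mul]

lemma osc_J1 (H : ℝ) (hH0 : 0 < H) :
    oscJ H 1 = Real.sqrt π * Real.Gamma (H + 3/2) / (2 * Real.Gamma (H + 2)) := by
  have h0 : oscJ H 1 = ∫ θ in (0:ℝ)..(π/2), Real.sin θ ^ (2*H+2) := by
    rw [oscJ]
    apply intervalIntegral.integral_congr
    intro θ hθ
    rw [Set.uIcc_of_le (by linarith [Real.pi_pos] : (0:ℝ) ≤ π/2)] at hθ
    have hs : 0 ≤ Real.sin θ :=
      Real.sin_nonneg_of_nonneg_of_le_pi hθ.1 (by linarith [hθ.2, Real.pi_pos])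
    simp only [one_mul]
    have hgoal : Real.sin θ ^ (2*H+2) = Real.sin θ ^ (2*H+1) * Real.sin θ := by
      rw [show 2*H+2 = (2*H+1)+1 by ring]
      exact rpow_succ_of_nonneg hs (2*H+1) (by linarith)
    rw [hgoal]
    ring
  have hbeta := realBeta (H + 3/2) (1/2) (by linarith) (by norm_num)
  have hsub := osc_sub_sq H hH0
  rw [show H + 3/2 - 1 = H + 1/2 by ring, show (1:ℝ)/2 - 1 = -(1:ℝ)/2 by ring, hsub,
    Real.Gamma_one_half_eq, show H + 3/2 + 1/2 = H + 2 by ring] at hbeta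
  rw [h0]
  have hG2 : (0:ℝ) < Real.Gamma (H+2) := Real.Gamma_pos_of_pos (by linarith)
  have h6 : 2 * (∫ θ in (0:ℝ)..(π/2), Real.sin θ ^ (2*H+2)) * Real.Gamma (H+2)
      = Real.Gamma (H + 3/2) * Real.sqrt π := by
    rw [hbeta]
    field_simp
  rw [eq_div_iff (by positivity : (2:ℝ) * Real.Gamma (H+2) ≠ 0)]
  linear_combination h6

/-- The limit of the normalized product. -/
lemma osc_prod_limit (H : ℝ) (hH0 : 0 < H) (hH : H ≤ 1/2) :
    Filter.Tendsto
      (fun ℓ : ℕ => (ℓ:ℝ) ^ (2*H+2) * ∏ k ∈ Finset.range ℓ, (((k:ℝ) - H) / ((k:ℝ) + H + 2)))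
      Filter.atTop (nhds (Real.Gamma (H+2) / Real.Gamma (-H))) := by
  have hGneH : Real.Gamma (-H) ≠ 0 := by
    apply Real.Gamma_ne_zero
    intro m hcon
    have hHm : H = (m:ℝ) := by
      have := neg_injective hcon
      exact this
    rcases m with _ | m
    · push_cast at hHm; linarith
    · push_cast at hHm
      have : (0:ℝ) ≤ (m:ℝ) := Nat.cast_nonneg m
      linarith
  have hA : Filter.Tendsto
      (fun n : ℕ => Real.GammaSeq (H+2) n / Real.GammaSeq (-H) n * (((n:ℝ)+1)/(n:ℝ)) ^ (2*H+2))
      Filter.atTop (nhds (Real.Gamma (H+2) / Real.Gamma (-H))) := by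
    have h1 := (Real.GammaSeq_tendsto_Gamma (H+2)).div (Real.GammaSeq_tendsto_Gamma (-H)) hGneH
    have h2 : Filter.Tendsto (fun n : ℕ => (((n:ℝ)+1)/(n:ℝ)) ^ (2*H+2))
        Filter.atTop (nhds 1) := by
      have h3 : Filter.Tendsto (fun n : ℕ => ((n:ℝ)+1)/(n:ℝ)) Filter.atTop (nhds 1) := by
        have h4 : Filter.Tendsto (fun n : ℕ => 1 + 1/(n:ℝ)) Filter.atTop (nhds 1) := by
          have h5 := Filter.Tendsto.const_add (1:ℝ) tendsto_one_div_atTop_nhds_zero_nat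
          simpa using h5
        apply h4.congr'
        filter_upwards [Filter.eventually_ge_atTop 1] with n hn
        have hn' : (n:ℝ) ≠ 0 := by
          have : (0:ℝ) < n := by exact_mod_cast hn
          exact this.ne'
        field_simp
      have := h3.rpow_const (p := 2*H+2) (Or.inr (by linarith))
      simpa using this
    have := h1.mul h2
    simpa using this
  have hEq : ∀ n : ℕ, 1 ≤ n →
      Real.GammaSeq (H+2) n / Real.GammaSeq (-H) n * (((n:ℝ)+1)/(n:ℝ)) ^ (2*H+2)
      = ((n+1 : ℕ):ℝ) ^ (2*H+2) * ∏ k ∈ Finset.range (n+1), (((k:ℝ) - H) / ((k:ℝ) + H + 2)) := by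
    intro n hn
    have hnpos : (0:ℝ) < n := by exact_mod_cast hn
    have hprod : ∏ k ∈ Finset.range (n+1), (((k:ℝ) - H) / ((k:ℝ) + H + 2))
        = (∏ j ∈ Finset.range (n+1), (-H + (j:ℝ))) / (∏ j ∈ Finset.range (n+1), ((H+2) + (j:ℝ))) := by
      rw [← Finset.prod_div_distrib]
      apply Finset.prod_congr rfl
      intro j _
      congr 1 <;> ring
    have hP1 : (∏ j ∈ Finset.range (n+1), (-H + (j:ℝ))) ≠ 0 := by
      apply Finset.prod_ne_zero_iff.mpr
      intro j _
      rcases Nat.eq_zero_or_pos j with rfl | hj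
      · push_cast
        intro hcon; linarith
      · have : (1:ℝ) ≤ (j:ℝ) := by exact_mod_cast hj
        intro hcon; linarith
    have hP2 : (∏ j ∈ Finset.range (n+1), ((H+2) + (j:ℝ))) ≠ 0 := by
      apply Finset.prod_ne_zero_iff.mpr
      intro j _
      have : (0:ℝ) ≤ (j:ℝ) := Nat.cast_nonneg j
      intro hcon; linarith
    rw [hprod, Real.GammaSeq, Real.GammaSeq]
    have hfac : ((n.factorial : ℕ):ℝ) ≠ 0 :=
      Nat.cast_ne_zero.mpr (Nat.factorial_ne_zero n)
    have hkey : (n:ℝ) ^ (H+2) = (n:ℝ) ^ (2*H+2) * (n:ℝ) ^ (-H) := by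
      rw [← Real.rpow_add hnpos]
      congr 1
      ring
    have hdivpow : (((n:ℝ)+1)/(n:ℝ)) ^ (2*H+2) = ((n:ℝ)+1) ^ (2*H+2) / (n:ℝ) ^ (2*H+2) :=
      Real.div_rpow (by linarith) hnpos.le _
    have hcast : ((n+1 : ℕ):ℝ) = (n:ℝ)+1 := by push_cast; ring
    rw [hdivpow, hcast, hkey]
    have hr2 : (n:ℝ) ^ (-H) ≠ 0 := (Real.rpow_pos_of_pos hnpos _).ne'
    have hr3 : (n:ℝ) ^ (2*H+2) ≠ 0 := (Real.rpow_pos_of_pos hnpos _).ne'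
    field_simp
  have hshift : Filter.Tendsto
      (fun n : ℕ => ((n+1 : ℕ):ℝ) ^ (2*H+2) * ∏ k ∈ Finset.range (n+1), (((k:ℝ) - H) / ((k:ℝ) + H + 2)))
      Filter.atTop (nhds (Real.Gamma (H+2) / Real.Gamma (-H))) := by
    apply hA.congr'
    filter_upwards [Filter.eventually_ge_atTop 1] with n hn
    exact hEq n hn
  exact (Filter.tendsto_add_atTop_iff_nat 1).mp hshift

/-- The final constant identity. -/
lemma osc_const (H : ℝ) (hH0 : 0 < H) (hH : H ≤ 1/2) :
    2 * (Real.sqrt π * Real.Gamma (H + 3/2) / (2 * Real.Gamma (H + 2))) *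
      (Real.Gamma (H+2) / Real.Gamma (-H))
      = -(2:ℝ) ^ (-(2*H+1)) * Real.Gamma (2*H+2) * Real.sin (π * H) := by
  have hpi := Real.pi_pos
  have hsin : 0 < Real.sin (π * H) := by
    apply Real.sin_pos_of_pos_of_lt_pi (by positivity)
    nlinarith
  have hG2 : 0 < Real.Gamma (H+2) := Real.Gamma_pos_of_pos (by linarith)
  have hG1 : 0 < Real.Gamma (1+H) := Real.Gamma_pos_of_pos (by linarith)
  have hG32 : 0 < Real.Gamma (H+3/2) := Real.Gamma_pos_of_pos (by linarith)
  have hrefl := Real.Gamma_mul_Gamma_one_sub (-H)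
  rw [show 1 - (-H) = 1 + H by ring, show π * (-H) = -(π*H) by ring, Real.sin_neg] at hrefl
  -- hrefl : Γ(-H) * Γ(1+H) = π / (-sin (π H))
  have hrefl' : Real.Gamma (-H) * Real.Gamma (1+H) * Real.sin (π*H) = -π := by
    rw [div_neg] at hrefl
    field_simp at hrefl
    rw [hrefl, mul_comm H π, neg_mul, div_mul_cancel₀ _ hsin.ne']
  have hGneH : Real.Gamma (-H) ≠ 0 := by
    intro hcon
    rw [hcon, zero_mul, zero_mul] at hrefl'
    linarith
  have hdup := Real.Gamma_mul_Gamma_add_half (H+1)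
  rw [show H + 1 + 1/2 = H + 3/2 by ring, show 1 - 2*(H+1) = -(2*H+1) by ring,
    show 2 * (H+1) = 2*H+2 by ring, show Real.Gamma (H+1) = Real.Gamma (1+H) by rw [add_comm]]
    at hdup
  -- hdup : Γ(1+H) * Γ(H+3/2) = Γ(2H+2) * 2^(-(2H+1)) * √π
  have hsqrt : Real.sqrt π * Real.sqrt π = π := Real.mul_self_sqrt hpi.le
  have hsqrtne : Real.sqrt π ≠ 0 := by positivity
  have hLHS : 2 * (Real.sqrt π * Real.Gamma (H + 3/2) / (2 * Real.Gamma (H + 2))) *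
      (Real.Gamma (H+2) / Real.Gamma (-H))
      = Real.sqrt π * Real.Gamma (H+3/2) / Real.Gamma (-H) := by
    field_simp
  rw [hLHS, div_eq_iff hGneH]
  apply mul_left_cancel₀ hsqrtne
  linear_combination Real.Gamma (H+3/2) * hsqrt - Real.sin (π*H) * Real.Gamma (-H) * hdup
    + Real.Gamma (H+3/2) * hrefl'

theorem oscillatory_integral_asymptotics (H : ℝ) (hH0 : 0 < H) (hH : H ≤ 1 / 2) :
    Filter.Tendsto
      (fun ℓ : ℕ => (ℓ : ℝ) ^ (2 * H + 2) *
        ∫ φ in (0:ℝ)..π, Real.sin (((ℓ : ℝ) + 1 / 2) * φ) * (Real.sin (φ / 2)) ^ (2 * H + 1))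
      Filter.atTop
      (nhds (-(2 : ℝ) ^ (-(2 * H + 1)) * Real.Gamma (2 * H + 2) * Real.sin (π * H))) := by
  have hfun : (fun ℓ : ℕ => (ℓ : ℝ) ^ (2 * H + 2) *
        ∫ φ in (0:ℝ)..π, Real.sin (((ℓ : ℝ) + 1 / 2) * φ) * (Real.sin (φ / 2)) ^ (2 * H + 1))
      = fun ℓ : ℕ => (2 * oscJ H 1) *
          ((ℓ:ℝ) ^ (2*H+2) * ∏ k ∈ Finset.range ℓ, (((k:ℝ) - H) / ((k:ℝ) + H + 2))) := by
    funext ℓ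
    rw [osc_sub2 H hH0 ℓ, osc_prod H hH0 ℓ]
    ring
  rw [hfun]
  have hlim := (osc_prod_limit H hH0 hH).const_mul (2 * oscJ H 1)
  have hval : (2 * oscJ H 1) * (Real.Gamma (H+2) / Real.Gamma (-H))
      = -(2 : ℝ) ^ (-(2 * H + 1)) * Real.Gamma (2 * H + 2) * Real.sin (π * H) := by
    rw [osc_J1 H hH0]
    exact osc_const H hH0 hH
  rw [hval] at hlim
  exact hlim
end
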